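/- For every positive integer m there exists a subset G of the hypercube {−1,+1}^m whose cardinality is at least 2^(m/16) and such that for any two distinct elements v, v' of G the ℓ¹ distance satisfies Σ_{i=1}^m |v_i − v'_i| ≥ m/2; equivalently, any two distinct elements of G differ in at least m/4 coordinates. -/

import Mathlib

open Finset

private lemma sep_ball_card_le (m r : ℕ) (g : Fin m → Bool) :
    ((univ : Finset (Fin m → Bool)).filter
      (fun u => (univ.filter fun i => u i ≠ g i).card ≤ r)).card
      ≤ ∑ k ∈ range (r + 1), m.choose k := by
  classical
  have h := Finset.card_le_card_of_injOn
    (f := fun u : Fin m → Bool => univ.filter fun i => u i ≠ g i)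
    (s := (univ : Finset (Fin m → Bool)).filter
      (fun u => (univ.filter fun i => u i ≠ g i).card ≤ r))
    (t := (range (r + 1)).biUnion fun k => powersetCard k (univ : Finset (Fin m)))
    (by
      intro u hu
      simp only [mem_coe, mem_filter, mem_univ, true_and] at hu
      refine mem_biUnion.2 ⟨(univ.filter fun i => u i ≠ g i).card, ?_, ?_⟩
      · exact mem_range.2 (Nat.lt_succ_of_le hu)
      · exact mem_powersetCard.2 ⟨subset_univ _, rfl⟩)
    (by
      intro u hu v hv huv
      funext i
      have huv' : (univ.filter fun i => u i ≠ g i) = (univ.filter fun i => v i ≠ g i) := huv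
      have hi := Finset.ext_iff.1 huv' i
      simp only [mem_filter, mem_univ, true_and] at hi
      revert hi
      cases u i <;> cases v i <;> cases g i <;> simp)
  calc ((univ : Finset (Fin m → Bool)).filter
      (fun u => (univ.filter fun i => u i ≠ g i).card ≤ r)).card
      ≤ ((range (r + 1)).biUnion fun k => powersetCard k (univ : Finset (Fin m))).card := h
    _ = ∑ k ∈ range (r + 1), m.choose k := by
        rw [Finset.card_biUnion]
        · simp
        · intro a _ b _ hab
          exact Finset.pairwise_disjoint_powersetCard univ hab

private lemma sep_sum_choose (m r : ℕ) (hr : r ≤ m) :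
    (∑ k ∈ range (r + 1), m.choose k) * 3 ^ (m - r) ≤ 4 ^ m := by
  have h4 : (4 : ℕ) ^ m = ∑ k ∈ range (m + 1), 1 ^ k * 3 ^ (m - k) * m.choose k := by
    rw [show (4 : ℕ) = 1 + 3 by norm_num, add_pow]
    exact Finset.sum_congr rfl fun k _ => by simp
  rw [Finset.sum_mul, h4]
  refine le_trans (Finset.sum_le_sum ?_) (Finset.sum_le_sum_of_subset_of_nonneg ?_ ?_)
  · intro k hk
    have hk' : k ≤ r := Nat.lt_succ_iff.1 (mem_range.1 hk)
    have : (3 : ℕ) ^ (m - r) ≤ 3 ^ (m - k) :=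
      Nat.pow_le_pow_right (by norm_num) (Nat.sub_le_sub_left hk' m)
    calc m.choose k * 3 ^ (m - r) ≤ m.choose k * 3 ^ (m - k) :=
          Nat.mul_le_mul_left _ this
      _ = 1 ^ k * 3 ^ (m - k) * m.choose k := by ring
  · exact Finset.range_subset_range.2 (Nat.succ_le_succ hr)
  · intro k _ _; positivity

private lemma sep_exists_code (m : ℕ) (hm : 1 ≤ m) :
    ∃ G : Finset (Fin m → Bool),
      (∀ u ∈ G, ∀ v ∈ G, u ≠ v → m ≤ 4 * (univ.filter fun i => u i ≠ v i).card) ∧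
      2 ^ m ≤ G.card * ∑ k ∈ range ((m - 1) / 4 + 1), m.choose k := by
  classical
  set r := (m - 1) / 4 with hrdef
  set Pr : Finset (Fin m → Bool) → Prop := fun G =>
    ∀ u ∈ G, ∀ v ∈ G, u ≠ v → m ≤ 4 * (univ.filter fun i => u i ≠ v i).card with hPr
  have hne : ((univ : Finset (Finset (Fin m → Bool))).filter Pr).Nonempty := by
    refine ⟨∅, mem_filter.2 ⟨mem_univ _, ?_⟩⟩
    intro u hu; simp at hu
  obtain ⟨G, hG, hmax⟩ := Finset.exists_max_image _ Finset.card hne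
  have hPG : Pr G := (mem_filter.1 hG).2
  refine ⟨G, hPG, ?_⟩
  -- covering property
  have hcover : ∀ u : Fin m → Bool, ∃ g ∈ G, (univ.filter fun i => u i ≠ g i).card ≤ r := by
    intro u
    by_contra hc
    push_neg at hc
    have hdist : ∀ g ∈ G, m ≤ 4 * (univ.filter fun i => u i ≠ g i).card := by
      intro g hg
      have h1 : r < (univ.filter fun i => u i ≠ g i).card := hc g hg
      have h2 : m - 1 < (univ.filter fun i => u i ≠ g i).card * 4 :=
        (Nat.div_lt_iff_lt_mul (by norm_num)).1 h1
      omega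
    have huG : u ∉ G := by
      intro huG
      have := hdist u huG
      simp at this
      omega
    have hPi : Pr (insert u G) := by
      intro a ha b hb hab
      rcases mem_insert.1 ha with rfl | ha'
      · rcases mem_insert.1 hb with rfl | hb'
        · exact absurd rfl hab
        · exact hdist b hb'
      · rcases mem_insert.1 hb with rfl | hb'
        · have := hdist a ha'
          have hsymm : (univ.filter fun i => a i ≠ b i) = (univ.filter fun i => b i ≠ a i) := by
            apply Finset.filter_congr; intro i _; simp [ne_comm]
          rw [hsymm]; exact this
        · exact hPG a ha' b hb' hab
    have hmem : insert u G ∈ (univ : Finset (Finset (Fin m → Bool))).filter Pr :=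
      mem_filter.2 ⟨mem_univ _, hPi⟩
    have := hmax _ hmem
    rw [Finset.card_insert_of_notMem huG] at this
    omega
  -- counting
  have hsub : (univ : Finset (Fin m → Bool)) ⊆
      G.biUnion fun g => (univ : Finset (Fin m → Bool)).filter
        (fun u => (univ.filter fun i => u i ≠ g i).card ≤ r) := by
    intro u _
    obtain ⟨g, hg, hle⟩ := hcover u
    exact mem_biUnion.2 ⟨g, hg, mem_filter.2 ⟨mem_univ _, hle⟩⟩
  have hcard : (2 : ℕ) ^ m ≤ ∑ g ∈ G, ((univ : Finset (Fin m → Bool)).filter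
      (fun u => (univ.filter fun i => u i ≠ g i).card ≤ r)).card := by
    calc (2 : ℕ) ^ m = (univ : Finset (Fin m → Bool)).card := by simp
      _ ≤ _ := le_trans (Finset.card_le_card hsub) (Finset.card_biUnion_le)
  calc (2 : ℕ) ^ m ≤ ∑ g ∈ G, ((univ : Finset (Fin m → Bool)).filter
      (fun u => (univ.filter fun i => u i ≠ g i).card ≤ r)).card := hcard
    _ ≤ ∑ _g ∈ G, ∑ k ∈ range (r + 1), m.choose k :=
        Finset.sum_le_sum fun g _ => sep_ball_card_le m r g
    _ = G.card * ∑ k ∈ range (r + 1), m.choose k := by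
        rw [Finset.sum_const, smul_eq_mul]

theorem exists_separated_hypercube_subset (m : ℕ) (hm : 1 ≤ m) :
    ∃ G : Finset (Fin m → ℝ),
      (∀ v ∈ G, ∀ i, v i = 1 ∨ v i = -1) ∧
      (2 : ℝ) ^ ((m : ℝ) / 16) ≤ (G.card : ℝ) ∧
      (∀ v ∈ G, ∀ v' ∈ G, v ≠ v' → (m : ℝ) / 2 ≤ ∑ i, |v i - v' i|) ∧
      (∀ v ∈ G, ∀ v' ∈ G, v ≠ v' →
        (m : ℝ) / 4 ≤ ((Finset.univ.filter fun i => v i ≠ v' i).card : ℝ)) := by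
  classical
  obtain ⟨G₀, hsep, hcount⟩ := sep_exists_code m hm
  set r := (m - 1) / 4 with hrdef
  set V := ∑ k ∈ range (r + 1), m.choose k with hVdef
  have hrm : r ≤ m := le_trans (Nat.div_le_self _ _) (Nat.sub_le _ _)
  have hVpos : 0 < V := by
    have : 0 < m.choose 0 := by simp
    exact lt_of_lt_of_le this (Finset.single_le_sum (f := fun k => m.choose k)
      (fun k _ => Nat.zero_le _) (mem_range.2 (Nat.succ_pos r)))
  -- the cardinality bound in ℝ
  have hcardR : (2 : ℝ) ^ ((m : ℝ) / 16) ≤ (G₀.card : ℝ) := by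
    set c : ℝ := (m : ℝ) / 16 with hcdef
    have hc0 : 0 ≤ c := by positivity
    have key : (2 : ℝ) ^ ((m : ℝ) + c) ≤ (3 : ℝ) ^ ((m - r : ℕ) : ℝ) := by
      have h1 : ((2 : ℝ) ^ (17 : ℕ)) ^ c ≤ ((3 : ℝ) ^ (12 : ℕ)) ^ c :=
        Real.rpow_le_rpow (by positivity) (by norm_num) hc0
      have h2 : ((2 : ℝ) ^ (17 : ℕ)) ^ c = (2 : ℝ) ^ ((m : ℝ) + c) := by
        rw [← Real.rpow_natCast 2 17, ← Real.rpow_mul (by norm_num)]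
        congr 1
        rw [hcdef]; ring
      have h3 : ((3 : ℝ) ^ (12 : ℕ)) ^ c = (3 : ℝ) ^ (12 * c) := by
        rw [← Real.rpow_natCast 3 12, ← Real.rpow_mul (by norm_num)]
        norm_num
      have h4 : (3 : ℝ) ^ (12 * c) ≤ (3 : ℝ) ^ ((m - r : ℕ) : ℝ) := by
        apply Real.rpow_le_rpow_of_exponent_le (by norm_num)
        have hr4 : (4 : ℝ) * r ≤ (m : ℝ) - 1 := by
          have h' : (4 * r : ℕ) ≤ m - 1 := by
            have := Nat.div_mul_le_self (m - 1) 4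
            omega
          calc (4 : ℝ) * r = ((4 * r : ℕ) : ℝ) := by push_cast; ring
            _ ≤ ((m - 1 : ℕ) : ℝ) := Nat.cast_le.2 h'
            _ = (m : ℝ) - 1 := by
                have : (1 : ℕ) ≤ m := hm
                push_cast [this]; ring
        have hmr : ((m - r : ℕ) : ℝ) = (m : ℝ) - r := by
          push_cast [hrm]; ring
        rw [hmr, hcdef]
        nlinarith [Nat.cast_nonneg (α := ℝ) m]
      calc (2 : ℝ) ^ ((m : ℝ) + c) = ((2 : ℝ) ^ (17 : ℕ)) ^ c := h2.symm
        _ ≤ ((3 : ℝ) ^ (12 : ℕ)) ^ c := h1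
        _ = (3 : ℝ) ^ (12 * c) := h3
        _ ≤ _ := h4
    -- combine with counting bounds
    have hA : (2 : ℝ) ^ m ≤ (G₀.card : ℝ) * V := by
      have := hcount
      calc (2 : ℝ) ^ m = ((2 ^ m : ℕ) : ℝ) := by push_cast; ring
        _ ≤ ((G₀.card * V : ℕ) : ℝ) := Nat.cast_le.2 hcount
        _ = (G₀.card : ℝ) * V := by push_cast; ring
    have hB : (V : ℝ) * 3 ^ (m - r) ≤ 4 ^ m := by
      calc (V : ℝ) * 3 ^ (m - r) = ((V * 3 ^ (m - r) : ℕ) : ℝ) := by push_cast; ring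
        _ ≤ ((4 ^ m : ℕ) : ℝ) := Nat.cast_le.2 (sep_sum_choose m r hrm)
        _ = (4 : ℝ) ^ m := by push_cast; ring
    have hVR : (0 : ℝ) < V := by exact_mod_cast hVpos
    have h3pos : (0 : ℝ) < 3 ^ (m - r) := by positivity
    have hkey2 : (2 : ℝ) ^ c * 4 ^ m ≤ 2 ^ m * 3 ^ (m - r) := by
      have e1 : (2 : ℝ) ^ ((m : ℝ) + c) = 2 ^ m * 2 ^ c := by
        rw [Real.rpow_add (by norm_num), Real.rpow_natCast]
      have e2 : (3 : ℝ) ^ ((m - r : ℕ) : ℝ) = 3 ^ (m - r) := Real.rpow_natCast 3 (m - r)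
      have := key
      rw [e1, e2] at this
      have h2m : (0 : ℝ) < 2 ^ m := by positivity
      calc (2 : ℝ) ^ c * 4 ^ m = (2 ^ m * 2 ^ c) * 2 ^ m := by
            rw [show (4 : ℝ) = 2 * 2 by norm_num, mul_pow]; ring
        _ ≤ (3 ^ (m - r)) * 2 ^ m := by
            exact mul_le_mul_of_nonneg_right this (le_of_lt h2m)
        _ = 2 ^ m * 3 ^ (m - r) := by ring
    -- now: 2^c * V * 3^(m-r) ≤ 2^c * 4^m ≤ 2^m * 3^(m-r) ≤ G₀.card * V * 3^(m-r)
    have final : (2 : ℝ) ^ c * (V * 3 ^ (m - r)) ≤ (G₀.card : ℝ) * (V * 3 ^ (m - r)) := by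
      have hc2 : (0 : ℝ) ≤ 2 ^ c := le_of_lt (Real.rpow_pos_of_pos (by norm_num) c)
      calc (2 : ℝ) ^ c * (V * 3 ^ (m - r)) ≤ 2 ^ c * 4 ^ m :=
            mul_le_mul_of_nonneg_left hB hc2
        _ ≤ 2 ^ m * 3 ^ (m - r) := hkey2
        _ ≤ ((G₀.card : ℝ) * V) * 3 ^ (m - r) :=
            mul_le_mul_of_nonneg_right hA (le_of_lt h3pos)
        _ = (G₀.card : ℝ) * (V * 3 ^ (m - r)) := by ring
    exact le_of_mul_le_mul_right final (mul_pos hVR h3pos)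
  -- map to real vectors
  set f : (Fin m → Bool) → (Fin m → ℝ) := fun b i => if b i then 1 else -1 with hfdef
  have hfinj : Function.Injective f := by
    intro a b hab
    funext i
    have := congrFun hab i
    simp only [hfdef] at this
    cases ha : a i <;> cases hb : b i <;> simp [ha, hb] at this ⊢
    · norm_num at this
    · norm_num at this
  refine ⟨G₀.image f, ?_, ?_, ?_, ?_⟩
  · intro v hv i
    obtain ⟨b, _, rfl⟩ := Finset.mem_image.1 hv
    simp only [hfdef]
    by_cases h : b i <;> simp [h]
  · rwa [Finset.card_image_of_injective _ hfinj]
  · intro v hv v' hv' hne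
    obtain ⟨b, hb, rfl⟩ := Finset.mem_image.1 hv
    obtain ⟨b', hb', rfl⟩ := Finset.mem_image.1 hv'
    have hbne : b ≠ b' := fun h => hne (by rw [h])
    have hd := hsep b hb b' hb' hbne
    have heq : ∀ i, |f b i - f b' i| = if b i ≠ b' i then (2 : ℝ) else 0 := by
      intro i
      simp only [hfdef]
      cases h1 : b i <;> cases h2 : b' i <;> norm_num
    calc (m : ℝ) / 2 ≤ 2 * ((univ.filter fun i => b i ≠ b' i).card : ℝ) := by
          have : (m : ℝ) ≤ 4 * ((univ.filter fun i => b i ≠ b' i).card : ℝ) := by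
            exact_mod_cast hd
          linarith
      _ = ∑ i ∈ univ.filter (fun i => b i ≠ b' i), (2 : ℝ) := by
          rw [Finset.sum_const, nsmul_eq_mul]; ring
      _ = ∑ i, if b i ≠ b' i then (2 : ℝ) else 0 := by
          rw [Finset.sum_filter]
      _ = ∑ i, |f b i - f b' i| := by
          exact Finset.sum_congr rfl fun i _ => (heq i).symm
  · intro v hv v' hv' hne
    obtain ⟨b, hb, rfl⟩ := Finset.mem_image.1 hv
    obtain ⟨b', hb', rfl⟩ := Finset.mem_image.1 hv'
    have hbne : b ≠ b' := fun h => hne (by rw [h])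
    have hd := hsep b hb b' hb' hbne
    have hfil : (univ.filter fun i => f b i ≠ f b' i) = (univ.filter fun i => b i ≠ b' i) := by
      apply Finset.filter_congr
      intro i _
      simp only [hfdef]
      cases h1 : b i <;> cases h2 : b' i <;> norm_num
    rw [hfil]
    have : (m : ℝ) ≤ 4 * ((univ.filter fun i => b i ≠ b' i).card : ℝ) := by exact_mod_cast hd
    linarith
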